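/- Let A be a Stone topological L-algebra. Then A is residually finite (i.e., profinite) if and only if for every clopen subset K ⊆ A there exist a finite L-algebra F with the discrete topology and a continuous L-homomorphism φ : A → F such that φ⁻¹(φ '' K) = K. -/

import Mathlib

open FirstOrder Language Structure

section Aux

variable {L : FirstOrder.Language}

/-- The trivial one-point `L`-structure. -/
instance unitStructure : L.Structure Unit where
  funMap _ _ := ()
  RelMap _ _ := True

/-- Product `L`-structure on a Pi type. -/
instance piStructure {ι : Type*} (M : ι → Type*) [∀ i, L.Structure (M i)] :
    L.Structure (∀ i, M i) where
  funMap f v := fun i => funMap f fun j => v j i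
  RelMap r v := ∀ i, RelMap r fun j => v j i

/-- The canonical hom into a product of `L`-structures. -/
def piHom {ι : Type*} {A : Type*} [L.Structure A] (M : ι → Type*) [∀ i, L.Structure (M i)]
    (φ : ∀ i, A →[L] M i) : A →[L] ∀ i, M i where
  toFun x i := φ i x
  map_fun' := by
    intro n f x
    funext i
    exact (φ i).map_fun' f x
  map_rel' := by
    intro n r x h i
    exact (φ i).map_rel' r x h

/-- Descend a recognizing hom onto a finite algebra to universe `Type 0`. -/
lemma descend {A : Type*} [TopologicalSpace A] [L.Structure A]
    (P : Type*) [Finite P] [TopologicalSpace P] [DiscreteTopology P] [L.Structure P]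
    (Φ : A →[L] P) (hΦ : Continuous Φ) {K : Set A} (hrec : ⇑Φ ⁻¹' (⇑Φ '' K) = K) :
    ∃ (F : Type) (_ : Finite F) (iT : TopologicalSpace F) (iS : L.Structure F),
      letI := iT; letI := iS;
      DiscreteTopology F ∧ ∃ φ : A →[L] F, Continuous (φ : A → F) ∧
        ⇑φ ⁻¹' (⇑φ '' K) = K := by
  obtain ⟨n, ⟨e⟩⟩ := Finite.exists_equiv_fin P
  letI : L.Structure (Fin n) := e.inducedStructure
  refine ⟨Fin n, inferInstance, ⊥, inferInstance, ⟨rfl⟩,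
    ((e.inducedStructureEquiv (L := L)).toEmbedding.toHom).comp Φ, ?_, ?_⟩
  · exact (continuous_of_discreteTopology (α := P)).comp hΦ
  · show (⇑e ∘ ⇑Φ) ⁻¹' ((⇑e ∘ ⇑Φ) '' K) = K
    rw [Set.image_comp, Set.preimage_comp, Set.preimage_image_eq _ e.injective, hrec]

end Aux

/-- Residual finiteness of a topological `L`-algebra. -/
def ResiduallyFinite (L : FirstOrder.Language) (A : Type*) [TopologicalSpace A]
    [L.Structure A] : Prop :=
  ∀ a b : A, a ≠ b →
    ∃ (F : Type) (_ : Finite F) (iT : TopologicalSpace F) (iS : L.Structure F),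
      letI := iT; letI := iS;
      DiscreteTopology F ∧ ∃ φ : A →[L] F, Continuous (φ : A → F) ∧ φ a ≠ φ b

/-- A Stone topological `L`-algebra is profinite iff every clopen subset is recognized
by a continuous homomorphism onto a finite algebra. -/
theorem residuallyFinite_iff_clopen_recognized (L : FirstOrder.Language) {A : Type*}
    [TopologicalSpace A] [L.Structure A]
    [CompactSpace A] [T2Space A] [TotallyDisconnectedSpace A]
    (hA : ∀ (n : ℕ) (f : L.Functions n), Continuous fun v : Fin n → A => funMap f v) :
    ResiduallyFinite L A ↔
      ∀ K : Set A, IsClopen K →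
        ∃ (F : Type) (_ : Finite F) (iT : TopologicalSpace F) (iS : L.Structure F),
          letI := iT; letI := iS;
          DiscreteTopology F ∧ ∃ φ : A →[L] F, Continuous (φ : A → F) ∧
            ⇑φ ⁻¹' (⇑φ '' K) = K := by
  classical
  constructor
  · -- forward direction
    intro h K hK
    -- a total choice of separating homs
    have hch : ∀ a b : A, ∃ (F : Type) (iT : TopologicalSpace F) (iS : L.Structure F),
        Finite F ∧ @DiscreteTopology F iT ∧
        ∃ φ : @Language.Hom L A F _ iS, @Continuous A F _ iT φ ∧ (a ≠ b → φ a ≠ φ b) := by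
      intro a b
      by_cases hab : a = b
      · refine ⟨Unit, ⊥, unitStructure, inferInstance, ⟨rfl⟩,
          ⟨fun _ => (), fun _ _ => rfl, fun _ _ _ => trivial⟩, ?_, ?_⟩
        · exact continuous_const
        · exact fun hne => absurd hab hne
      · obtain ⟨F, hF, iT, iS, hD, φ, hcont, hne⟩ := h a b hab
        exact ⟨F, iT, iS, hF, hD, φ, hcont, fun _ => hne⟩
    choose Fam iT iS hFin hD φ hc hsep using hch
    letI : ∀ a b : A, TopologicalSpace (Fam a b) := iT
    letI : ∀ a b : A, L.Structure (Fam a b) := iS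
    haveI : ∀ a b : A, Finite (Fam a b) := hFin
    haveI : ∀ a b : A, DiscreteTopology (Fam a b) := hD
    -- inner compactness step
    have inner : ∀ a : A, ∃ t : Finset A,
        a ∈ K → ∀ x, (∀ b ∈ t, φ a b x = φ a b a) → x ∈ K := by
      intro a
      by_cases ha : a ∈ K
      · have hKc : IsCompact Kᶜ := (hK.2.isClosed_compl).isCompact
        have hcov : Kᶜ ⊆ ⋃ b : {b // b ∈ Kᶜ}, ((φ a b.1) ⁻¹' {φ a b.1 a})ᶜ := by
          intro x hx
          refine Set.mem_iUnion.2 ⟨⟨x, hx⟩, ?_⟩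
          have hax : a ≠ x := fun h' => hx (h' ▸ ha)
          exact fun hmem => (hsep a x hax) (Set.mem_singleton_iff.1 hmem).symm
        obtain ⟨t', ht'⟩ := hKc.elim_finite_subcover
          (fun b : {b // b ∈ Kᶜ} => ((φ a b.1) ⁻¹' {φ a b.1 a})ᶜ)
          (fun b => ((isClosed_discrete _).preimage (hc a b.1)).isOpen_compl)
          hcov
        refine ⟨t'.image Subtype.val, fun _ x hx => ?_⟩
        by_contra hxK
        obtain ⟨b, hbt, hb⟩ := Set.mem_iUnion₂.1 (ht' hxK)
        exact hb (hx b.1 (Finset.mem_image.2 ⟨b, hbt, rfl⟩))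
      · exact ⟨∅, fun ha' => absurd ha' ha⟩
    choose t ht using inner
    -- outer compactness step
    have hUopen : ∀ a : A, IsOpen {x | ∀ b ∈ t a, φ a b x = φ a b a} := by
      intro a
      have : {x | ∀ b ∈ t a, φ a b x = φ a b a}
          = ⋂ b ∈ t a, (φ a b) ⁻¹' {φ a b a} := by
        ext x; simp [Set.mem_iInter]
      rw [this]
      exact isOpen_biInter_finset fun b _ =>
        (hc a b).isOpen_preimage _ (isOpen_discrete _)
    have hcovK : K ⊆ ⋃ i : {a // a ∈ K}, {x | ∀ b ∈ t i.1, φ i.1 b x = φ i.1 b i.1} := by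
      intro a ha
      exact Set.mem_iUnion.2 ⟨⟨a, ha⟩, fun b _ => rfl⟩
    obtain ⟨s, hs⟩ := (hK.1.isCompact).elim_finite_subcover
      (fun i : {a // a ∈ K} => {x | ∀ b ∈ t i.1, φ i.1 b x = φ i.1 b i.1})
      (fun i => hUopen i.1) hcovK
    -- the recognizing hom into a finite product
    let Φ : A →[L] ∀ i : s, ∀ b : (t i.1.1 : Finset A), Fam i.1.1 b.1 :=
      piHom _ (fun i : s => piHom _ (fun b : (t i.1.1 : Finset A) => φ i.1.1 b.1))
    have hΦc : Continuous Φ := continuous_pi fun i => continuous_pi fun b => hc i.1.1 b.1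
    have hrec : ⇑Φ ⁻¹' (⇑Φ '' K) = K := by
      apply Set.Subset.antisymm
      · rintro x ⟨y, hyK, hxy⟩
        obtain ⟨i, his, hyV⟩ := Set.mem_iUnion₂.1 (hs hyK)
        refine ht i.1 i.2 x fun b hb => ?_
        have h1 : φ i.1 b y = φ i.1 b x :=
          congrFun (congrFun hxy (⟨i, his⟩ : s)) (⟨b, hb⟩ : (t i.1 : Finset A))
        exact h1.symm.trans (hyV b hb)
      · exact Set.subset_preimage_image _ _
    exact descend _ Φ hΦc hrec
  · -- reverse direction
    intro h a b hab
    haveI : TotallySeparatedSpace A := loc_compact_t2_tot_disc_iff_tot_sep.mp inferInstance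
    obtain ⟨K, hK, haK, hbK⟩ := exists_isClopen_of_totally_separated hab
    obtain ⟨F, hF, iT, iS, hD, φ, hcont, hrec⟩ := h K hK
    refine ⟨F, hF, iT, iS, hD, φ, hcont, fun heq => ?_⟩
    apply hbK
    have : b ∈ ⇑φ ⁻¹' (⇑φ '' K) := ⟨a, haK, heq⟩
    rwa [hrec] at this
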